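/- Let H be a real inner product space, λ > 0, and let L_1, …, L_{mα} : H → ℝ be convex differentiable loss terms, grouped so that sample i contributes the α terms L_{(i−1)α+1}, …, L_{iα}. Let f minimize g ↦ (1/(mn)) Σ_{j=1}^{mα} L_j(g) + (λ/2)‖g‖² and let f^{∖i} minimize the same objective with all α terms of sample i omitted. Suppose each omitted term decomposes as L_{(i,j)}(g) = Σ_{k=1}^{n/α} c_{j,k}(E_{j,k}(g)), where each c_{j,k} : ℝ → ℝ is τ-Lipschitz and each E_{j,k} : H → ℝ is ρ-admissible at the corresponding mini-sample input x_{(i,j)} with ‖x_{(i,j)}‖ ≤ nv√d/α. Then for every evaluation functional E that is ρ-admissible at a test input x with ‖x‖ ≤ nv√d, it holds that |E(f) − E(f^{∖i})| ≤ dτρ²v²n²/(mλα), which equals α times the bound dτρ²v²n²/(mλα²) for removing a single mini-sample. -/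

import Mathlib

open Set Finset

section helpers
variable {H : Type*} [NormedAddCommGroup H] [InnerProductSpace ℝ H]

lemma my_convexOn_sum {ι : Type*} (t : Finset ι) (f : ι → H → ℝ)
    (h : ∀ i ∈ t, ConvexOn ℝ univ (f i)) :
    ConvexOn ℝ univ (fun x => ∑ i ∈ t, f i x) := by
  induction t using Finset.cons_induction with
  | empty => simpa using convexOn_const (0:ℝ) convex_univ
  | cons a s ha ih =>
      simp only [Finset.sum_cons]
      exact (h a (Finset.mem_cons_self _ _)).add
        (ih fun i hi => h i (Finset.mem_cons_of_mem hi))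

lemma combo_norm_sq (f g : H) (t : ℝ) :
    ‖(1-t)•f + t•g‖^2 = (1-t)*‖f‖^2 + t*‖g‖^2 - t*(1-t)*‖f-g‖^2 := by
  have h : (1-t)•f + t•g = f + t•(g-f) := by
    rw [smul_sub, sub_smul, one_smul]; abel
  have e1 : ‖g‖^2 = ‖f‖^2 + 2*(inner ℝ f (g-f) : ℝ) + ‖g-f‖^2 := by
    have := norm_add_sq_real f (g-f); simpa using this
  have e2 : ‖f - g‖ = ‖g - f‖ := norm_sub_rev _ _
  rw [h, norm_add_sq_real, real_inner_smul_right, norm_smul, e1, e2]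
  simp [mul_pow, sq_abs]
  ring

lemma strong_min (A : H → ℝ) (hA : ConvexOn ℝ univ A) (lam : ℝ) (f : H)
    (hf : ∀ g, A f + lam/2*‖f‖^2 ≤ A g + lam/2*‖g‖^2) (g : H) :
    lam/2 * ‖g - f‖^2 ≤ (A g + lam/2*‖g‖^2) - (A f + lam/2*‖f‖^2) := by
  have key : ∀ t : ℝ, 0 < t → t < 1 →
      lam/2*(1-t)*‖g-f‖^2 ≤ (A g + lam/2*‖g‖^2) - (A f + lam/2*‖f‖^2) := by
    intro t ht ht1
    have hcomb := hA.2 (mem_univ f) (mem_univ g)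
      (by linarith : (0:ℝ) ≤ 1-t) ht.le (by ring)
    have hmin := hf ((1-t)•f + t•g)
    have hid := combo_norm_sq f g t
    have e2 : ‖f - g‖ = ‖g - f‖ := norm_sub_rev _ _
    have e2' : ‖f-g‖^2 = ‖g-f‖^2 := by rw [e2]
    rw [hid, e2'] at hmin
    simp only [smul_eq_mul] at hcomb
    have h1 : t * (lam/2*(1-t)*‖g-f‖^2) ≤
        t * ((A g + lam/2*‖g‖^2) - (A f + lam/2*‖f‖^2)) := by
      nlinarith [hmin, hcomb]
    exact le_of_mul_le_mul_left h1 ht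
  have hlim : Filter.Tendsto (fun k : ℕ => lam/2*(1-1/((k:ℝ)+2))*‖g-f‖^2)
      Filter.atTop (nhds (lam/2*(1-0)*‖g-f‖^2)) := by
    apply Filter.Tendsto.mul_const
    apply Filter.Tendsto.const_mul
    apply Filter.Tendsto.const_sub
    have h2 : Filter.Tendsto (fun k : ℕ => (k:ℝ)+2) Filter.atTop Filter.atTop :=
      Filter.tendsto_atTop_add_const_right _ 2 tendsto_natCast_atTop_atTop
    simp only [one_div]
    exact h2.inv_tendsto_atTop
  have := le_of_tendsto' hlim (fun k => by
    refine key _ (by positivity) ?_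
    rw [div_lt_one (by positivity)]
    linarith [Nat.cast_nonneg (α := ℝ) k])
  linarith [this]

end helpers

/-- **Function stability when removing a full sample (Corollary 1).**
`f` minimizes the L2- and structure-regularized objective over all `m α`
mini-sample loss terms (indexed by sample `i : Fin m` and mini-sample `j : Fin α`),
and `f'` minimizes the same objective with all `α` terms of sample `i₀` omitted.
Then any ρ-admissible evaluation functional at a test input of norm at most
`n v √d` changes by at most `d τ ρ² v² n² / (m λ α)`, which equals `α` times the
bound `d τ ρ² v² n² / (m λ α²)` for removing a single mini-sample. -/
theorem function_stability_remove_full_sample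
    {H : Type*} [NormedAddCommGroup H] [InnerProductSpace ℝ H]
    (m n α d : ℕ) (hm : 0 < m) (hn : 0 < n) (hα : 0 < α) (hdvd : α ∣ n)
    (L : Fin m → Fin α → H → ℝ)      -- sample i contributes the terms L i j
    (hconv : ∀ i j, ConvexOn ℝ univ (L i j))
    (hdiff : ∀ i j, Differentiable ℝ (L i j))
    (lam : ℝ) (hlam : 0 < lam)
    (i₀ : Fin m) (f f' : H)
    (hf : ∀ g : H,
      (1 / ((m : ℝ) * n)) * ∑ i, ∑ j, L i j f + lam / 2 * ‖f‖ ^ 2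
        ≤ (1 / ((m : ℝ) * n)) * ∑ i, ∑ j, L i j g + lam / 2 * ‖g‖ ^ 2)
    (hf' : ∀ g : H,
      (1 / ((m : ℝ) * n)) * ∑ i ∈ univ.erase i₀, ∑ j, L i j f' + lam / 2 * ‖f'‖ ^ 2
        ≤ (1 / ((m : ℝ) * n)) * ∑ i ∈ univ.erase i₀, ∑ j, L i j g + lam / 2 * ‖g‖ ^ 2)
    (τ ρ v : ℝ) (hτ : 0 ≤ τ) (hρ : 0 ≤ ρ) (hv : 0 ≤ v)
    (c : Fin α → Fin (n / α) → ℝ → ℝ) (E : Fin α → Fin (n / α) → H → ℝ)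
    (xnorm : Fin α → ℝ) (hx0 : ∀ j, 0 ≤ xnorm j)
    (hxb : ∀ j, xnorm j ≤ (n : ℝ) * v * Real.sqrt d / α)
    (hdecomp : ∀ (j : Fin α) (g : H), L i₀ j g = ∑ k, c j k (E j k g))
    (hlip : ∀ (j : Fin α) (k : Fin (n / α)) (a b : ℝ),
      |c j k a - c j k b| ≤ τ * |a - b|)
    (hadm : ∀ (j : Fin α) (k : Fin (n / α)) (g g' : H),
      |E j k g - E j k g'| ≤ ρ * ‖g - g'‖ * xnorm j) :
    (∀ (Etest : H → ℝ) (xt : ℝ), 0 ≤ xt → xt ≤ (n : ℝ) * v * Real.sqrt d →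
      (∀ g g' : H, |Etest g - Etest g'| ≤ ρ * ‖g - g'‖ * xt) →
      |Etest f - Etest f'|
        ≤ (d : ℝ) * τ * ρ ^ 2 * v ^ 2 * n ^ 2 / ((m : ℝ) * lam * α)) ∧
    (d : ℝ) * τ * ρ ^ 2 * v ^ 2 * n ^ 2 / ((m : ℝ) * lam * α)
      = (α : ℝ) * ((d : ℝ) * τ * ρ ^ 2 * v ^ 2 * n ^ 2 / ((m : ℝ) * lam * α ^ 2)) := by
  have hm' : (0:ℝ) < m := by exact_mod_cast hm
  have hn' : (0:ℝ) < n := by exact_mod_cast hn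
  have hα' : (0:ℝ) < α := by exact_mod_cast hα
  have hsd : (0:ℝ) ≤ Real.sqrt d := Real.sqrt_nonneg _
  set cst : ℝ := 1 / ((m : ℝ) * n) with hcst
  have hc0 : 0 ≤ cst := by positivity
  -- convexity of the two empirical objectives
  have hAconv : ConvexOn ℝ univ (fun g : H => cst * ∑ i, ∑ j, L i j g) := by
    have h1 : ConvexOn ℝ univ (fun g : H => ∑ i, ∑ j, L i j g) :=
      my_convexOn_sum _ _ (fun i _ => my_convexOn_sum _ _ (fun j _ => hconv i j))
    simpa [smul_eq_mul] using h1.smul hc0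
  have hA'conv : ConvexOn ℝ univ
      (fun g : H => cst * ∑ i ∈ univ.erase i₀, ∑ j, L i j g) := by
    have h1 : ConvexOn ℝ univ (fun g : H => ∑ i ∈ univ.erase i₀, ∑ j, L i j g) :=
      my_convexOn_sum _ _ (fun i _ => my_convexOn_sum _ _ (fun j _ => hconv i j))
    simpa [smul_eq_mul] using h1.smul hc0
  have hsc1 := strong_min (fun g : H => cst * ∑ i, ∑ j, L i j g) hAconv lam f
    (fun g => by simpa [hcst, div_eq_mul_inv, mul_comm] using hf g) f'
  have hsc2 := strong_min (fun g : H => cst * ∑ i ∈ univ.erase i₀, ∑ j, L i j g)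
    hA'conv lam f' (fun g => by simpa [hcst, div_eq_mul_inv, mul_comm] using hf' g) f
  have hsplit : ∀ g : H, (∑ i, ∑ j, L i j g)
      = (∑ i ∈ univ.erase i₀, ∑ j, L i j g) + ∑ j, L i₀ j g := by
    intro g
    rw [← Finset.add_sum_erase _ _ (Finset.mem_univ i₀)]
    ring
  have erev : ‖f' - f‖ = ‖f - f'‖ := norm_sub_rev _ _
  have erev2 : ‖f' - f‖^2 = ‖f - f'‖^2 := by rw [erev]
  rw [erev2] at hsc1
  have hNsq : lam * ‖f - f'‖^2 ≤ cst * (∑ j, L i₀ j f' - ∑ j, L i₀ j f) := by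
    have h1 := hsplit f
    have h2 := hsplit f'
    rw [h1, h2] at hsc1
    nlinarith [hsc1, hsc2]
  -- bound the removed-sample difference
  set N : ℝ := ‖f - f'‖ with hN
  have hN0 : 0 ≤ N := norm_nonneg _
  have hcard : ((n/α : ℕ):ℝ) * (α:ℝ) = (n:ℝ) := by
    rw [← Nat.cast_mul, Nat.div_mul_cancel hdvd]
  have hrow : ∑ j, L i₀ j f' - ∑ j, L i₀ j f
      ≤ (n:ℝ) * (τ*ρ*N*((n:ℝ)*v*Real.sqrt d/α)) := by
    rw [← Finset.sum_sub_distrib]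
    calc ∑ j, (L i₀ j f' - L i₀ j f)
        = ∑ j, ∑ k, (c j k (E j k f') - c j k (E j k f)) := by
          simp [hdecomp, Finset.sum_sub_distrib]
      _ ≤ ∑ _j : Fin α, ∑ _k : Fin (n/α), τ*(ρ*N*((n:ℝ)*v*Real.sqrt d/α)) := by
          refine Finset.sum_le_sum (fun j _ => Finset.sum_le_sum (fun k _ => ?_))
          have h1 := le_abs_self (c j k (E j k f') - c j k (E j k f))
          have h2 := hlip j k (E j k f') (E j k f)
          have h3 := hadm j k f' f
          rw [erev] at h3
          have h5 : τ * |E j k f' - E j k f| ≤ τ*(ρ*N*xnorm j) :=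
            mul_le_mul_of_nonneg_left h3 hτ
          have h6 : τ*(ρ*N*xnorm j) ≤ τ*(ρ*N*((n:ℝ)*v*Real.sqrt d/α)) := by
            apply mul_le_mul_of_nonneg_left
              (mul_le_mul_of_nonneg_left (hxb j) (by positivity)) hτ
          linarith
      _ = (n:ℝ) * (τ*ρ*N*((n:ℝ)*v*Real.sqrt d/α)) := by
          simp [Finset.sum_const, Finset.card_univ]
          rw [← mul_assoc, mul_comm (α:ℝ) ((n/α : ℕ):ℝ), hcard]
          ring
  have hKey : lam * N^2 ≤ (τ*ρ*v*Real.sqrt d*(n:ℝ)/((m:ℝ)*(α:ℝ))) * N := by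
    have h1 : cst * (∑ j, L i₀ j f' - ∑ j, L i₀ j f)
        ≤ cst * ((n:ℝ) * (τ*ρ*N*((n:ℝ)*v*Real.sqrt d/α))) :=
      mul_le_mul_of_nonneg_left hrow hc0
    have h2 : cst * ((n:ℝ) * (τ*ρ*N*((n:ℝ)*v*Real.sqrt d/α)))
        = (τ*ρ*v*Real.sqrt d*(n:ℝ)/((m:ℝ)*(α:ℝ))) * N := by
      rw [hcst]; field_simp
    linarith [hNsq, h1, h2.symm.le]
  have hNB : N ≤ τ*ρ*v*Real.sqrt d*(n:ℝ)/((m:ℝ)*lam*(α:ℝ)) := by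
    rcases eq_or_lt_of_le hN0 with h0 | h0
    · rw [← h0]; positivity
    · have h1 : lam * N ≤ τ*ρ*v*Real.sqrt d*(n:ℝ)/((m:ℝ)*(α:ℝ)) := by
        have := hKey
        rw [pow_two] at this
        have h2 : lam * N * N ≤ (τ*ρ*v*Real.sqrt d*(n:ℝ)/((m:ℝ)*(α:ℝ))) * N := by
          linarith [this]
        exact le_of_mul_le_mul_right h2 h0
      have h2 : N ≤ τ*ρ*v*Real.sqrt d*(n:ℝ)/((m:ℝ)*(α:ℝ))/lam := by
        rw [le_div_iff₀ hlam]; linarith [h1]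
      calc N ≤ τ*ρ*v*Real.sqrt d*(n:ℝ)/((m:ℝ)*(α:ℝ))/lam := h2
        _ = τ*ρ*v*Real.sqrt d*(n:ℝ)/((m:ℝ)*lam*(α:ℝ)) := by
          ring
  constructor
  · intro Etest xt hxt0 hxt1 hEtest
    have h1 := hEtest f f'
    have h2 : ρ * N * xt ≤ ρ * N * ((n : ℝ) * v * Real.sqrt d) :=
      mul_le_mul_of_nonneg_left hxt1 (by positivity)
    have h3 : ρ * N * ((n : ℝ) * v * Real.sqrt d)
        ≤ ρ * (τ*ρ*v*Real.sqrt d*(n:ℝ)/((m:ℝ)*lam*(α:ℝ))) * ((n : ℝ) * v * Real.sqrt d) := by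
      apply mul_le_mul_of_nonneg_right
        (mul_le_mul_of_nonneg_left hNB hρ) (by positivity)
    have h4 : ρ * (τ*ρ*v*Real.sqrt d*(n:ℝ)/((m:ℝ)*lam*(α:ℝ))) * ((n : ℝ) * v * Real.sqrt d)
        = (d : ℝ) * τ * ρ ^ 2 * v ^ 2 * n ^ 2 / ((m : ℝ) * lam * α) := by
      have hs : Real.sqrt d * Real.sqrt d = (d:ℝ) := Real.mul_self_sqrt (Nat.cast_nonneg d)
      linear_combination (ρ^2*τ*v^2*(n:ℝ)^2/((m:ℝ)*lam*(α:ℝ))) * hs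
    linarith
  · field_simp
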